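/- arXiv:2210.02294 — 4 statements merged into one kernel-verified Lean document; each statement's English description precedes it below -/
import Mathlib

section
/- Let σ be a tempered distribution on ℝ that vanishes to order m ≥ 0 at a point p ∈ ℝ. Let c₁ > 0 and let (φ_T)_{T>0} be a family of smooth functions on ℝ such that each φ_T has support contained in (p − c₁/T, p + c₁/T) and, for every integer j ≥ 0, there is a constant c_{2,j} > 0 with sup_{x∈ℝ} |φ_T^{(j)}(x)| ≤ c_{2,j} T^{j+1} for all T > 0. Then there exist C > 0 and T₀ > 0 such that |σ(φ_T)| ≤ C T^{−m} for all T ≥ T₀. -/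
open MeasureTheory Set

noncomputable section
def e2 (z : ℂ) : ℂ := Complex.exp (2 * Real.pi * Complex.I * z)


/-- The tempered distribution associated with the coefficients `(c_n)_{n≥1}`:
`σ(φ) = Σ_{n≥1} c_n ∫_ℝ e(nx)φ(x) dx`. -/
def assocDist (c : ℕ → ℂ) (φ : ℝ → ℂ) : ℂ :=
  ∑' n : ℕ, c (n + 1) * ∫ x : ℝ, e2 (((n : ℂ) + 1) * (x : ℂ)) * φ x

/-- A distribution `σ` vanishes to order `m ≥ 0` at `x₀` if there are `δ > 0`, `J`,
and locally bounded measurable functions `h_j` on `I = (x₀-δ, x₀+δ)` such that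
`σ(φ) = Σ_{j=0}^J (-1)^j ∫_I (x-x₀)^{m+j} h_j(x) φ^{(j)}(x) dx` for all smooth `φ`
with compact support contained in `I`. -/
def VanishesToOrder (σ : (ℝ → ℂ) → ℂ) (m : ℕ) (x₀ : ℝ) : Prop :=
  ∃ δ > 0, ∃ J : ℕ, ∃ h : ℕ → ℝ → ℂ,
    (∀ j ≤ J, Measurable (h j) ∧ ∀ K : Set ℝ, IsCompact K →
      K ⊆ Set.Ioo (x₀ - δ) (x₀ + δ) → ∃ C : ℝ, ∀ x ∈ K, ‖h j x‖ ≤ C) ∧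
    ∀ φ : ℝ → ℂ, ContDiff ℝ (⊤ : ℕ∞) φ → HasCompactSupport φ →
      tsupport φ ⊆ Set.Ioo (x₀ - δ) (x₀ + δ) →
      σ φ = ∑ j ∈ Finset.range (J + 1), (-1 : ℂ) ^ j *
        ∫ x in Set.Ioo (x₀ - δ) (x₀ + δ),
          ((x : ℂ) - (x₀ : ℂ)) ^ (m + j) * h j x * iteratedDeriv j φ x

/-- If a distribution `σ` vanishes to order `m ≥ 0` at `p` and
`(φ_T)_{T>0}` is a family of smooth functions supported in `(p - c₁/T, p + c₁/T)`
whose `j`-th derivatives are uniformly bounded by `c_{2,j} T^{j+1}`, then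
`|σ(φ_T)| ≤ C T^{-m}` for all sufficiently large `T`. -/
theorem vanishing_order_pairing_bound
    (σ : (ℝ → ℂ) → ℂ) (m : ℕ) (p : ℝ) (hσ : VanishesToOrder σ m p)
    (c₁ : ℝ) (hc₁ : 0 < c₁) (φ : ℝ → ℝ → ℂ)
    (hφ : ∀ T : ℝ, 0 < T → ContDiff ℝ (⊤ : ℕ∞) (φ T) ∧ HasCompactSupport (φ T) ∧
      tsupport (φ T) ⊆ Set.Ioo (p - c₁ / T) (p + c₁ / T))
    (hder : ∀ j : ℕ, ∃ c₂ : ℝ, 0 < c₂ ∧ ∀ T : ℝ, 0 < T →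
      ∀ x : ℝ, ‖iteratedDeriv j (φ T) x‖ ≤ c₂ * T ^ (j + 1)) :
    ∃ C : ℝ, 0 < C ∧ ∃ T₀ : ℝ, 0 < T₀ ∧ ∀ T : ℝ, T₀ ≤ T → ‖σ (φ T)‖ ≤ C / T ^ m := by
  obtain ⟨δ, hδ, J, h, hh, hrep⟩ := hσ
  choose c₂ hc₂pos hc₂ using hder
  -- the fixed compact set
  set K : Set ℝ := Set.Icc (p - δ/2) (p + δ/2) with hK
  have hKsub : K ⊆ Set.Ioo (p - δ) (p + δ) := by
    intro x hx
    constructor <;> [nlinarith [hx.1, hx.2]; nlinarith [hx.1, hx.2]]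
  have hCj : ∀ j, ∃ Cj : ℝ, 0 ≤ Cj ∧ ∀ x ∈ K, j ≤ J → ‖h j x‖ ≤ Cj := by
    intro j
    by_cases hj : j ≤ J
    · obtain ⟨C, hC⟩ := (hh j hj).2 K isCompact_Icc hKsub
      refine ⟨max C 0, le_max_right _ _, fun x hx _ => (hC x hx).trans (le_max_left _ _)⟩
    · exact ⟨0, le_refl _, fun x _ hj' => absurd hj' hj⟩
  choose Cj hCj0 hCjb using hCj
  -- the constant
  set C : ℝ := (∑ j ∈ Finset.range (J + 1), 2 * c₁ ^ (m + j + 1) * Cj j * c₂ j) + 1 with hCdef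
  have hCpos : 0 < C := by
    have : 0 ≤ ∑ j ∈ Finset.range (J + 1), 2 * c₁ ^ (m + j + 1) * Cj j * c₂ j :=
      Finset.sum_nonneg fun j _ => by
        have h1 := hCj0 j; have h2 := (hc₂pos j).le; positivity
    linarith
  set T₀ : ℝ := max (2 * c₁ / δ) 1 with hT₀def
  have hT₀pos : 0 < T₀ := lt_of_lt_of_le one_pos (le_max_right _ _)
  refine ⟨C, hCpos, T₀, hT₀pos, fun T hT => ?_⟩
  have hTpos : 0 < T := lt_of_lt_of_le hT₀pos hT
  have hc₁T : 0 < c₁ / T := div_pos hc₁ hTpos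
  have hsmall : c₁ / T ≤ δ / 2 := by
    rw [div_le_div_iff₀ hTpos (by norm_num : (0:ℝ) < 2)]
    have h1 : 2 * c₁ / δ ≤ T := le_trans (le_max_left _ _) hT
    calc c₁ * 2 = (2 * c₁ / δ) * δ := by field_simp
    _ ≤ δ * T := by nlinarith
  set U : Set ℝ := Set.Ioo (p - c₁/T) (p + c₁/T) with hU
  have hUK : U ⊆ K := fun x hx => ⟨by nlinarith [hx.1, hx.2], by nlinarith [hx.1, hx.2]⟩
  have hUS : U ⊆ Set.Ioo (p - δ) (p + δ) := hUK.trans hKsub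
  obtain ⟨hsmooth, hcpt, hsupp⟩ := hφ T hTpos
  have hsuppS : tsupport (φ T) ⊆ Set.Ioo (p - δ) (p + δ) := hsupp.trans hUS
  rw [hrep (φ T) hsmooth hcpt hsuppS]
  have key : ∀ j ∈ Finset.range (J + 1),
      ‖(-1 : ℂ) ^ j * ∫ x in Set.Ioo (p - δ) (p + δ),
        ((x : ℂ) - (p : ℂ)) ^ (m + j) * h j x * iteratedDeriv j (φ T) x‖ ≤
      2 * c₁ ^ (m + j + 1) * Cj j * c₂ j / T ^ m := by
    intro j hj
    rw [Finset.mem_range, Nat.lt_succ_iff] at hj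
    set f : ℝ → ℂ := fun x =>
      ((x : ℂ) - (p : ℂ)) ^ (m + j) * h j x * iteratedDeriv j (φ T) x with hf
    set B : ℝ := (c₁/T) ^ (m + j) * Cj j * (c₂ j * T ^ (j + 1)) with hB
    have hB0 : 0 ≤ B := by
      have h1 := hCj0 j; have h2 := (hc₂pos j).le; positivity
    have hfzero : ∀ x ∉ U, f x = 0 := by
      intro x hx
      have : x ∉ tsupport (φ T) := fun hmem => hx (hsupp hmem)
      have hz : iteratedDeriv j (φ T) x = 0 := by
        rw [iteratedDeriv_eq_iteratedFDeriv]
        have : iteratedFDeriv ℝ j (φ T) x = 0 := by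
          by_contra hne
          exact this (support_iteratedFDeriv_subset j (by simpa using hne))
        simp [this]
      simp [hf, hz]
    have hpt : ∀ x, ‖f x‖ ≤ U.indicator (fun _ => B) x := by
      intro x
      by_cases hx : x ∈ U
      · rw [Set.indicator_of_mem hx]
        have hx1 : |x - p| ≤ c₁ / T := by
          rw [abs_le]; constructor <;> [linarith [hx.1]; linarith [hx.2]]
        have hb1 : ‖((x : ℂ) - (p : ℂ)) ^ (m + j)‖ ≤ (c₁/T) ^ (m + j) := by
          rw [norm_pow]
          apply pow_le_pow_left₀ (norm_nonneg _)
          have : ((x : ℂ) - (p : ℂ)) = ((x - p : ℝ) : ℂ) := by push_cast; ring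
          rw [this, Complex.norm_real, Real.norm_eq_abs]
          exact hx1
        have hb2 : ‖h j x‖ ≤ Cj j := hCjb j x (hUK hx) hj
        have hb3 : ‖iteratedDeriv j (φ T) x‖ ≤ c₂ j * T ^ (j + 1) := hc₂ j T hTpos x
        calc ‖f x‖ = ‖((x : ℂ) - (p : ℂ)) ^ (m + j)‖ * ‖h j x‖ * ‖iteratedDeriv j (φ T) x‖ := by
              simp [hf, norm_mul]
        _ ≤ (c₁/T) ^ (m + j) * Cj j * (c₂ j * T ^ (j + 1)) := by
              have h1 := hCj0 j; have h2 := (hc₂pos j).le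
              apply mul_le_mul (mul_le_mul hb1 hb2 (norm_nonneg _) (by positivity)) hb3
                (norm_nonneg _) (by positivity)
      · rw [Set.indicator_of_notMem hx, hfzero x hx]; simp
    have hIg : Integrable (U.indicator (fun _ => B))
        (volume.restrict (Set.Ioo (p - δ) (p + δ))) := by
      apply Integrable.indicator _ measurableSet_Ioo
      exact (integrableOn_const_iff).mpr (Or.inr (by simp [Real.volume_Ioo]))
    have hstep1 : ‖∫ x in Set.Ioo (p - δ) (p + δ), f x‖ ≤
        ∫ x in Set.Ioo (p - δ) (p + δ), U.indicator (fun _ => B) x := by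
      refine (norm_integral_le_integral_norm f).trans ?_
      apply integral_mono_of_nonneg
      · exact Filter.Eventually.of_forall (fun x => norm_nonneg _)
      · exact hIg
      · exact Filter.Eventually.of_forall hpt
    have hstep2 : ∫ x in Set.Ioo (p - δ) (p + δ), U.indicator (fun _ => B) x
        = B * (2 * (c₁/T)) := by
      rw [setIntegral_indicator measurableSet_Ioo, Set.inter_eq_right.mpr hUS,
        setIntegral_const, measureReal_def, Real.volume_Ioo, smul_eq_mul]
      rw [ENNReal.toReal_ofReal (by linarith)]
      ring
    have : ‖(-1 : ℂ) ^ j * ∫ x in Set.Ioo (p - δ) (p + δ), f x‖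
        = ‖∫ x in Set.Ioo (p - δ) (p + δ), f x‖ := by
      rw [norm_mul]; simp
    rw [this]
    refine (hstep1.trans (le_of_eq hstep2)).trans (le_of_eq ?_)
    rw [hB]
    field_simp
    have hm1 : T ^ m * T⁻¹ ^ m = 1 := by rw [← mul_pow, mul_inv_cancel₀ hTpos.ne', one_pow]
    have hj1 : T ^ j * T⁻¹ ^ j = 1 := by rw [← mul_pow, mul_inv_cancel₀ hTpos.ne', one_pow]
    linear_combination (c₁ * c₁ ^ m * c₁ ^ j * T * Cj j * c₂ j) * (T ^ j * T⁻¹ ^ j) * hm1 + (c₁ * c₁ ^ m * c₁ ^ j * T * Cj j * c₂ j) * hj1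
  calc ‖∑ j ∈ Finset.range (J + 1), (-1 : ℂ) ^ j *
      ∫ x in Set.Ioo (p - δ) (p + δ),
        ((x : ℂ) - (p : ℂ)) ^ (m + j) * h j x * iteratedDeriv j (φ T) x‖
      ≤ ∑ j ∈ Finset.range (J + 1), 2 * c₁ ^ (m + j + 1) * Cj j * c₂ j / T ^ m :=
        norm_sum_le_of_le _ key
  _ = (∑ j ∈ Finset.range (J + 1), 2 * c₁ ^ (m + j + 1) * Cj j * c₂ j) / T ^ m := by
        rw [Finset.sum_div]
  _ ≤ C / T ^ m := by
        apply div_le_div_of_nonneg_right ?_ (by positivity)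
        · rw [hCdef]; linarith
end
end

section
/- Let k be an even positive integer, N a positive integer, p, q coprime integers with q > 0 and N | q, and let p̃ be an integer with p·p̃ ≡ 1 (mod q). Let f be a cusp form of weight k for Γ₀(N) with normalized Fourier coefficients a_n. Then there exist entire functions F, G : ℂ → ℂ such that F(s) = q^s G₀(s) Σ_{n≥1} a_n e(np/q) n^{−s+(k−1)/2} and G(s) = q^s G₀(s) Σ_{n≥1} a_n e(−n p̃/q) n^{−s+(k−1)/2} for every s with Re s > α + (k+1)/2, and such that F(s) = G(k − s) for all s ∈ ℂ. -/
open MeasureTheory Set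

noncomputable section

/-- `G₀(s) = 2(2π)^{-s}Γ(s)cos(πs/2)`. -/
def G0 (s : ℂ) : ℂ :=
  2 * ((2 * Real.pi : ℝ) : ℂ) ^ (-s) * Complex.Gamma s * Complex.cos (Real.pi * s / 2)

/-- A cusp form of weight `k` for `Γ₀(N)` with normalized Fourier coefficients `a`:
holomorphic on the upper half-plane, automorphic of weight `k` under `Γ₀(N)`,
with `(Im z)^{k/2}|f(z)|` bounded, and Fourier expansion
`f(z) = Σ_{n≥1} a_n n^{(k-1)/2} e(nz)`. -/
def IsCuspForm (k N : ℕ) (f : ℂ → ℂ) (a : ℕ → ℂ) : Prop :=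
  DifferentiableOn ℂ f {z : ℂ | 0 < z.im} ∧
  (∀ A B C D : ℤ, A * D - B * C = 1 → (N : ℤ) ∣ C → ∀ z : ℂ, 0 < z.im →
    f ((A * z + B) / (C * z + D)) = (C * z + D) ^ k * f z) ∧
  (∃ M : ℝ, ∀ z : ℂ, 0 < z.im → z.im ^ ((k : ℝ) / 2) * ‖f z‖ ≤ M) ∧
  (∀ z : ℂ, 0 < z.im →
    HasSum (fun n : ℕ =>
      a (n + 1) * ((n : ℂ) + 1) ^ (((k : ℂ) - 1) / 2) * e2 (((n : ℂ) + 1) * z)) (f z))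

/- ### Auxiliary lemmas -/

lemma aux_norm_e2_ofReal (x : ℝ) : ‖e2 ((x:ℝ):ℂ)‖ = 1 := by
  simp [e2, Complex.norm_exp]

lemma aux_summable {c : ℕ → ℂ} {C β : ℝ} (hc : ∀ n, ‖c n‖ ≤ C * ((n:ℝ)+1) ^ β)
    {σ : ℝ} (h : β + 1 < σ) :
    Summable (fun n : ℕ => ‖c n‖ / ((n:ℝ)+1) ^ σ) := by
  have hs : Summable (fun n : ℕ => C * ((n:ℝ)+1) ^ (β - σ)) := by
    have h1 : Summable (fun n : ℕ => ((n:ℝ)) ^ (β - σ)) :=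
      Real.summable_nat_rpow.mpr (by linarith)
    have h2 := (summable_nat_add_iff 1).mpr h1
    exact (h2.congr (fun n => by push_cast; ring_nf)).mul_left C
  refine Summable.of_nonneg_of_le (fun n => by positivity) (fun n => ?_) hs
  have hp : (0:ℝ) < ((n:ℝ)+1) := by positivity
  calc ‖c n‖ / ((n:ℝ)+1) ^ σ ≤ (C * ((n:ℝ)+1) ^ β) / ((n:ℝ)+1) ^ σ := by
        gcongr; exact hc n
    _ = C * ((n:ℝ)+1) ^ (β - σ) := by rw [Real.rpow_sub hp]; ring

lemma aux_decay {d C β : ℝ} (hd : 0 < d) {c : ℕ → ℂ}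
    (hc : ∀ n, ‖c n‖ ≤ C * ((n:ℝ)+1) ^ β) {H : ℝ → ℂ}
    (hH : ∀ t : ℝ, 0 < t → HasSum (fun n : ℕ => c n * Real.exp (-(d * ((n:ℝ)+1)) * t)) (H t))
    (r : ℝ) : H =O[Filter.atTop] (· ^ r) := by
  have hC : 0 ≤ C := by
    have := hc 0
    have h0 : (0:ℝ) ≤ ‖c 0‖ := norm_nonneg _
    simpa using le_trans h0 (by simpa using this)
  set g : ℕ → ℝ := fun n => C * ((n:ℝ)+1) ^ β * Real.exp (-(d/2) * ((n:ℝ)+1)) with hg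
  have hsum0 : Summable g := by
    set m := ⌈β⌉₊
    have hρ : ‖Real.exp (-(d/2))‖ < 1 := by
      rw [Real.norm_eq_abs, abs_of_pos (Real.exp_pos _)]
      exact Real.exp_lt_one_iff.mpr (by linarith)
    have h1 : Summable (fun n : ℕ => (n:ℝ) ^ m * (Real.exp (-(d/2))) ^ n) :=
      summable_pow_mul_geometric_of_norm_lt_one m hρ
    have h2 := ((summable_nat_add_iff 1).mpr h1).mul_left C
    refine Summable.of_nonneg_of_le (fun n => by positivity) (fun n => ?_) h2
    have h3 : ((n:ℝ)+1) ^ β ≤ ((n:ℝ)+1) ^ (m:ℝ) :=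
      Real.rpow_le_rpow_of_exponent_le (by linarith [Nat.cast_nonneg (α := ℝ) n]) (Nat.le_ceil β)
    have h4 : Real.exp (-(d/2) * ((n:ℝ)+1)) = (Real.exp (-(d/2))) ^ (n+1) := by
      rw [← Real.exp_nat_mul]; push_cast; ring_nf
    rw [hg]
    simp only []
    calc C * ((n:ℝ)+1) ^ β * Real.exp (-(d/2) * ((n:ℝ)+1))
        ≤ C * ((n:ℝ)+1) ^ (m:ℝ) * Real.exp (-(d/2) * ((n:ℝ)+1)) := by
          have := Real.exp_pos (-(d/2) * ((n:ℝ)+1))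
          gcongr
      _ = C * ((((n:ℕ)+1 : ℕ):ℝ) ^ m * (Real.exp (-(d/2))) ^ (n+1)) := by
          rw [h4, Real.rpow_natCast]; push_cast; ring
  have key : ∀ t : ℝ, 1 ≤ t → ‖H t‖ ≤ (∑' n, g n) * Real.exp (-(d/2) * t) := by
    intro t ht
    have ht0 : 0 < t := lt_of_lt_of_le one_pos ht
    have hterm : ∀ n : ℕ, ‖c n * Real.exp (-(d * ((n:ℝ)+1)) * t)‖
        ≤ g n * Real.exp (-(d/2) * t) := by
      intro n
      have hn0 : (0:ℝ) ≤ (n:ℝ) := Nat.cast_nonneg n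
      have hexp : Real.exp (-(d * ((n:ℝ)+1)) * t)
          ≤ Real.exp (-(d/2) * ((n:ℝ)+1)) * Real.exp (-(d/2) * t) := by
        rw [← Real.exp_add]
        apply Real.exp_le_exp.mpr
        nlinarith [mul_nonneg hd.le (mul_nonneg hn0 (sub_nonneg.mpr ht)),
          mul_nonneg hd.le (sub_nonneg.mpr ht), mul_nonneg hd.le hn0]
      rw [norm_mul]
      calc ‖c n‖ * ‖(Real.exp (-(d * ((n:ℝ)+1)) * t) : ℂ)‖
          ≤ (C * ((n:ℝ)+1) ^ β) * (Real.exp (-(d/2) * ((n:ℝ)+1)) * Real.exp (-(d/2) * t)) := by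
            have h1 : ‖(Real.exp (-(d * ((n:ℝ)+1)) * t) : ℂ)‖
                = Real.exp (-(d * ((n:ℝ)+1)) * t) := by
              rw [Complex.norm_real, Real.norm_eq_abs, abs_of_pos (Real.exp_pos _)]
            rw [h1]
            exact mul_le_mul (hc n) hexp (Real.exp_pos _).le (by positivity)
        _ = g n * Real.exp (-(d/2) * t) := by rw [hg]; ring
    have hsumg : Summable (fun n => g n * Real.exp (-(d/2) * t)) := hsum0.mul_right _
    have habs : Summable (fun n => ‖c n * (Real.exp (-(d * ((n:ℝ)+1)) * t) : ℂ)‖) :=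
      Summable.of_nonneg_of_le (fun n => norm_nonneg _) hterm hsumg
    rw [← (hH t ht0).tsum_eq]
    calc ‖∑' n, c n * (Real.exp (-(d * ((n:ℝ)+1)) * t) : ℂ)‖
        ≤ ∑' n, ‖c n * (Real.exp (-(d * ((n:ℝ)+1)) * t) : ℂ)‖ := norm_tsum_le_tsum_norm habs
      _ ≤ ∑' n, g n * Real.exp (-(d/2) * t) := Summable.tsum_le_tsum hterm habs hsumg
      _ = (∑' n, g n) * Real.exp (-(d/2) * t) := tsum_mul_right
  have hO : H =O[Filter.atTop] (fun t => Real.exp (-(d/2) * t)) := by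
    rw [Asymptotics.isBigO_iff]
    refine ⟨∑' n, g n, ?_⟩
    filter_upwards [Filter.eventually_ge_atTop 1] with t ht
    rw [Real.norm_eq_abs, abs_of_pos (Real.exp_pos _)]
    exact key t ht
  exact hO.trans (isLittleO_exp_neg_mul_rpow_atTop (by linarith) r).isBigO

lemma aux_cos_shift {k : ℕ} (hkeven : Even k) (s : ℂ) :
    Complex.cos ((Real.pi : ℂ) * ((k:ℂ) - s) / 2) =
      Complex.I ^ k * Complex.cos ((Real.pi : ℂ) * s / 2) := by
  obtain ⟨m, hm⟩ := hkeven
  have hI : Complex.I ^ k = (-1 : ℂ) ^ m := by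
    rw [hm, pow_add, ← mul_pow, Complex.I_mul_I]
  have harg : (Real.pi : ℂ) * ((k:ℂ) - s) / 2
      = (m:ℂ) * (Real.pi : ℂ) - (Real.pi : ℂ) * s / 2 := by
    rw [hm]; push_cast; ring
  have hcosm : Complex.cos ((m:ℂ) * (Real.pi : ℂ)) = (-1 : ℂ) ^ m := by
    rw [show ((m:ℂ) * (Real.pi:ℂ)) = (((m:ℝ) * Real.pi : ℝ) : ℂ) by push_cast; ring,
      ← Complex.ofReal_cos]
    rw [show ((m:ℝ) * Real.pi) = (m:ℝ) * Real.pi - 0 by ring, Real.cos_nat_mul_pi_sub]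
    push_cast; simp
  have hsinm : Complex.sin ((m:ℂ) * (Real.pi : ℂ)) = 0 := Complex.sin_nat_mul_pi m
  rw [harg, Complex.cos_sub, hcosm, hsinm, hI]
  ring

lemma aux_e2_split (r : ℤ) (q : ℤ) (hq : 0 < q) (n : ℕ) (t : ℝ) :
    e2 (((n:ℂ)+1) * (((r:ℂ) + (t:ℂ) * Complex.I) / (q:ℂ))) =
      e2 ((((n:ℂ)+1) * (r:ℂ)) / (q:ℂ)) *
        ((Real.exp (-(2 * Real.pi / (q:ℝ) * ((n:ℝ)+1)) * t) : ℝ) : ℂ) := by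
  have hq0 : (q:ℂ) ≠ 0 := by exact_mod_cast hq.ne'
  rw [e2, e2, Complex.ofReal_exp, ← Complex.exp_add]
  congr 1
  push_cast
  field_simp
  linear_combination (t:ℂ) * Complex.I_sq

lemma aux_cpow_split (q : ℤ) (hq : 0 < q) (n : ℕ) (s : ℂ) :
    ((( 2 * Real.pi / (q:ℝ) * ((n:ℝ)+1) : ℝ)) : ℂ) ^ s
      = ((2 * Real.pi : ℝ) : ℂ) ^ s * ((q:ℂ) ^ s)⁻¹ * ((n:ℂ)+1) ^ s := by
  have hqR : (0:ℝ) < (q:ℝ) := by exact_mod_cast hq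
  have e1 : (((q:ℝ)⁻¹ : ℝ) : ℂ) ^ s = ((q:ℂ) ^ s)⁻¹ := by
    rw [Complex.ofReal_inv, Complex.inv_cpow]
    · norm_num
    · rw [Complex.arg_ofReal_of_nonneg hqR.le]
      exact Real.pi_ne_zero.symm
  have e2 : ((((n:ℝ)+1 : ℝ)) : ℂ) ^ s = ((n:ℂ)+1) ^ s := by norm_num
  rw [show (2 * Real.pi / (q:ℝ) * ((n:ℝ)+1)) = (2*Real.pi) * ((q:ℝ)⁻¹ * ((n:ℝ)+1)) from by ring,
    Complex.ofReal_mul (2*Real.pi) _,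
    Complex.mul_cpow_ofReal_nonneg (by positivity) (by positivity),
    Complex.ofReal_mul ((q:ℝ)⁻¹) _,
    Complex.mul_cpow_ofReal_nonneg (by positivity) (by positivity), e1, e2, mul_assoc]

lemma aux_norm_cpow (k n : ℕ) :
    ‖((n:ℂ)+1) ^ (((k:ℂ)-1)/2)‖ = ((n:ℝ)+1) ^ (((k:ℝ)-1)/2) := by
  rw [show ((n:ℂ)+1) = (((n:ℝ)+1 : ℝ) : ℂ) by push_cast; ring,
    Complex.norm_cpow_eq_rpow_re_of_pos (by positivity)]
  norm_num

lemma aux_frac_eq (r : ℤ) (q : ℤ) (n : ℕ) :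
    (((n:ℂ)+1) * (r:ℂ)) / (q:ℂ) = (((((n:ℝ)+1) * (r:ℝ)) / (q:ℝ) : ℝ) : ℂ) := by
  push_cast; ring

set_option maxHeartbeats 2000000 in
/-- Functional equation: for `f` a cusp form of even weight `k` for
`Γ₀(N)`, `p/q` with `N ∣ q` and `p·p̃ ≡ 1 (mod q)`, the completed twisted `L`-functions
`F(s) = q^s G₀(s) Σ a_n e(np/q) n^{-s+(k-1)/2}` and
`G(s) = q^s G₀(s) Σ a_n e(-np̃/q) n^{-s+(k-1)/2}` extend to entire functions satisfying
`F(s) = G(k - s)`. -/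
theorem twisted_functional_equation_integral_weight
    (k N : ℕ) (hk : 0 < k) (hkeven : Even k) (hN : 0 < N)
    (p q : ℤ) (hq : 0 < q) (hcop : IsCoprime p q) (hNq : (N : ℤ) ∣ q)
    (ptilde : ℤ) (hpt : q ∣ p * ptilde - 1)
    (f : ℂ → ℂ) (a : ℕ → ℂ) (α : ℝ) (hα : 0 < α)
    (hf : IsCuspForm k N f a)
    (hbd : ∃ C : ℝ, ∀ n : ℕ, ‖a (n + 1)‖ ≤ C * ((n : ℝ) + 1) ^ α) :
    ∃ F G : ℂ → ℂ, Differentiable ℂ F ∧ Differentiable ℂ G ∧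
      (∀ s : ℂ, α + ((k : ℝ) + 1) / 2 < s.re →
        F s = (q : ℂ) ^ s * G0 s * ∑' n : ℕ,
          a (n + 1) * e2 ((((n : ℂ) + 1) * (p : ℂ)) / (q : ℂ)) *
            ((n : ℂ) + 1) ^ (-s + ((k : ℂ) - 1) / 2)) ∧
      (∀ s : ℂ, α + ((k : ℝ) + 1) / 2 < s.re →
        G s = (q : ℂ) ^ s * G0 s * ∑' n : ℕ,
          a (n + 1) * e2 (-(((n : ℂ) + 1) * (ptilde : ℂ)) / (q : ℂ)) *
            ((n : ℂ) + 1) ^ (-s + ((k : ℂ) - 1) / 2)) ∧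
      ∀ s : ℂ, F s = G ((k : ℂ) - s) := by
  classical
  obtain ⟨C, hC⟩ := hbd
  obtain ⟨hol, auto, hbnd, fexp⟩ := hf
  obtain ⟨b, hb⟩ := hpt
  have hqR : (0:ℝ) < (q:ℝ) := by exact_mod_cast hq
  have hqC : (q:ℂ) ≠ 0 := by exact_mod_cast hq.ne'
  have hk1 : (1:ℝ) ≤ (k:ℝ) := by exact_mod_cast hk
  set β : ℝ := α + ((k:ℝ)-1)/2 with hβ
  set C' : ℝ := max C 0 with hC'
  set d : ℝ := 2 * Real.pi / (q:ℝ) with hd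
  have hd0 : 0 < d := by rw [hd]; positivity
  -- coefficient sequences
  set cF : ℕ → ℂ := fun n =>
    a (n+1) * e2 ((((n:ℂ)+1) * (p:ℂ)) / (q:ℂ)) * ((n:ℂ)+1) ^ (((k:ℂ)-1)/2) with hcF
  set cG : ℕ → ℂ := fun n =>
    a (n+1) * e2 (-(((n:ℂ)+1) * (ptilde:ℂ)) / (q:ℂ)) * ((n:ℂ)+1) ^ (((k:ℂ)-1)/2) with hcG
  set hfun : ℝ → ℂ := fun t => f (((p:ℂ) + (t:ℂ) * Complex.I) / (q:ℂ)) with hhfun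
  set gfun : ℝ → ℂ := fun t => f ((((-ptilde : ℤ):ℂ) + (t:ℂ) * Complex.I) / (q:ℂ)) with hgfun
  -- membership in the upper half plane
  have him : ∀ (r : ℤ) (t : ℝ), 0 < t → 0 < (((r:ℂ) + (t:ℂ) * Complex.I) / (q:ℂ)).im := by
    intro r t ht
    rw [show (q:ℂ) = (((q:ℝ)):ℂ) by push_cast; rfl, Complex.div_ofReal_im]
    simp only [Complex.add_im, Complex.intCast_im, Complex.mul_im, Complex.ofReal_re,
      Complex.I_im, Complex.I_re, Complex.ofReal_im, mul_zero, mul_one, zero_add]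
    positivity
  -- Fourier expansions along vertical lines
  have hHS : ∀ (r : ℤ) (t : ℝ), 0 < t →
      HasSum (fun n : ℕ =>
          (a (n+1) * e2 ((((n:ℂ)+1) * (r:ℂ)) / (q:ℂ)) * ((n:ℂ)+1) ^ (((k:ℂ)-1)/2)) *
            ((Real.exp (-(d * ((n:ℝ)+1)) * t) : ℝ) : ℂ))
        (f (((r:ℂ) + (t:ℂ) * Complex.I) / (q:ℂ))) := by
    intro r t ht
    have h1 := fexp (((r:ℂ) + (t:ℂ) * Complex.I) / (q:ℂ)) (him r t ht)
    have h2 : (fun n : ℕ =>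
        a (n+1) * ((n:ℂ)+1) ^ (((k:ℂ)-1)/2) *
          e2 (((n:ℂ)+1) * (((r:ℂ) + (t:ℂ) * Complex.I) / (q:ℂ))))
        = fun n : ℕ =>
          (a (n+1) * e2 ((((n:ℂ)+1) * (r:ℂ)) / (q:ℂ)) * ((n:ℂ)+1) ^ (((k:ℂ)-1)/2)) *
            ((Real.exp (-(d * ((n:ℝ)+1)) * t) : ℝ) : ℂ) := by
      funext n
      rw [aux_e2_split r q hq n t, hd]
      ring
    rw [h2] at h1
    exact h1
  -- coefficient bounds
  have hnormE2 : ∀ (r : ℤ) (n : ℕ), ‖e2 ((((n:ℂ)+1) * (r:ℂ)) / (q:ℂ))‖ = 1 := by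
    intro r n
    rw [aux_frac_eq]
    exact aux_norm_e2_ofReal _
  have hbdF : ∀ n, ‖cF n‖ ≤ C' * ((n:ℝ)+1) ^ β := by
    intro n
    rw [hcF]
    simp only [norm_mul]
    rw [hnormE2 p n, aux_norm_cpow, mul_one]
    calc ‖a (n+1)‖ * ((n:ℝ)+1) ^ (((k:ℝ)-1)/2)
        ≤ (C' * ((n:ℝ)+1) ^ α) * ((n:ℝ)+1) ^ (((k:ℝ)-1)/2) := by
          have h1 : ‖a (n+1)‖ ≤ C' * ((n:ℝ)+1) ^ α :=
            le_trans (hC n) (by gcongr; exact le_max_left _ _)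
          have h2 : (0:ℝ) ≤ ((n:ℝ)+1) ^ (((k:ℝ)-1)/2) := by positivity
          exact mul_le_mul_of_nonneg_right h1 h2
      _ = C' * ((n:ℝ)+1) ^ β := by
          rw [hβ, mul_assoc, ← Real.rpow_add (by positivity)]
  have hbdG : ∀ n, ‖cG n‖ ≤ C' * ((n:ℝ)+1) ^ β := by
    intro n
    rw [hcG]
    simp only [norm_mul]
    have he : e2 (-(((n:ℂ)+1) * (ptilde:ℂ)) / (q:ℂ))
        = e2 ((((n:ℂ)+1) * ((-ptilde : ℤ):ℂ)) / (q:ℂ)) := by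
      congr 1; push_cast; ring
    rw [he, hnormE2 (-ptilde) n, aux_norm_cpow, mul_one]
    calc ‖a (n+1)‖ * ((n:ℝ)+1) ^ (((k:ℝ)-1)/2)
        ≤ (C' * ((n:ℝ)+1) ^ α) * ((n:ℝ)+1) ^ (((k:ℝ)-1)/2) := by
          have h1 : ‖a (n+1)‖ ≤ C' * ((n:ℝ)+1) ^ α :=
            le_trans (hC n) (by gcongr; exact le_max_left _ _)
          have h2 : (0:ℝ) ≤ ((n:ℝ)+1) ^ (((k:ℝ)-1)/2) := by positivity
          exact mul_le_mul_of_nonneg_right h1 h2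
      _ = C' * ((n:ℝ)+1) ^ β := by
          rw [hβ, mul_assoc, ← Real.rpow_add (by positivity)]
  -- HasSum statements in the right shape
  have hHSF : ∀ t : ℝ, 0 < t →
      HasSum (fun n : ℕ => cF n * ((Real.exp (-(d * ((n:ℝ)+1)) * t) : ℝ) : ℂ)) (hfun t) :=
    fun t ht => hHS p t ht
  have hHSG : ∀ t : ℝ, 0 < t →
      HasSum (fun n : ℕ => cG n * ((Real.exp (-(d * ((n:ℝ)+1)) * t) : ℝ) : ℂ)) (gfun t) := by
    intro t ht
    have h1 := hHS (-ptilde) t ht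
    have h2 : (fun n : ℕ =>
        (a (n+1) * e2 ((((n:ℂ)+1) * ((-ptilde : ℤ):ℂ)) / (q:ℂ)) * ((n:ℂ)+1) ^ (((k:ℂ)-1)/2)) *
          ((Real.exp (-(d * ((n:ℝ)+1)) * t) : ℝ) : ℂ))
        = fun n : ℕ => cG n * ((Real.exp (-(d * ((n:ℝ)+1)) * t) : ℝ) : ℂ) := by
      funext n
      rw [hcG]
      congr 3
      push_cast; ring
    rw [h2] at h1
    exact h1
  -- continuity and local integrability
  have hcontf : ContinuousOn f {z : ℂ | 0 < z.im} := hol.continuousOn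
  have hint : ∀ (r : ℤ), LocallyIntegrableOn
      (fun t : ℝ => f (((r:ℂ) + (t:ℂ) * Complex.I) / (q:ℂ))) (Ioi 0) := by
    intro r
    refine ContinuousOn.locallyIntegrableOn ?_ measurableSet_Ioi
    refine ContinuousOn.comp hcontf ?_ ?_
    · exact (Continuous.continuousOn (by continuity))
    · intro t ht
      exact him r t ht
  -- modularity ⇒ functional equation for (hfun, gfun)
  have hfeq : ∀ x : ℝ, x ∈ Ioi (0:ℝ) →
      hfun (1/x) = (Complex.I ^ k * ((x:ℝ) ^ (k:ℝ) : ℝ)) • gfun x := by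
    intro x hx
    rw [mem_Ioi] at hx
    have hx0 : (x:ℂ) ≠ 0 := by exact_mod_cast hx.ne'
    set z₀ : ℂ := (((-ptilde : ℤ):ℂ) + (x:ℂ) * Complex.I) / (q:ℂ) with hz₀
    have hz₀im : 0 < z₀.im := him (-ptilde) x hx
    have hdet : p * ptilde - b * q = 1 := by linarith [hb]
    have hauto := auto p b q ptilde (by linarith [hb]) hNq z₀ hz₀im
    have hden : (q:ℂ) * z₀ + (ptilde:ℂ) = (x:ℂ) * Complex.I := by
      rw [hz₀]
      push_cast
      field_simp
      ring
    have hbC : (p:ℂ) * (ptilde:ℂ) - 1 = (q:ℂ) * (b:ℂ) := by exact_mod_cast hb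
    have hnum : ((p:ℂ) * z₀ + (b:ℂ)) / ((x:ℂ) * Complex.I)
        = ((p:ℂ) + ((1/x : ℝ):ℂ) * Complex.I) / (q:ℂ) := by
      rw [hz₀]
      push_cast
      field_simp
      linear_combination (-1:ℂ)*hbC + (-1:ℂ)*Complex.I_sq
    rw [hden] at hauto
    rw [hnum] at hauto
    have hlhs : hfun (1/x) = f (((p:ℂ) + ((1/x : ℝ):ℂ) * Complex.I) / (q:ℂ)) := by
      rw [hhfun]
    have hgx : gfun x = f z₀ := by rw [hgfun]
    rw [hlhs, hauto, smul_eq_mul, hgx, Real.rpow_natCast, Complex.ofReal_pow, mul_pow]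
    ring
  -- decay at infinity
  have htopF : ∀ r : ℝ, (fun t => hfun t - 0) =O[Filter.atTop] (· ^ r) := by
    intro r
    simpa [sub_zero] using aux_decay hd0 hbdF hHSF r
  have htopG : ∀ r : ℝ, (fun t => gfun t - 0) =O[Filter.atTop] (· ^ r) := by
    intro r
    simpa [sub_zero] using aux_decay hd0 hbdG hHSG r
  -- the strong FE pair
  set P : WeakFEPair ℂ :=
    { f := hfun
      g := gfun
      k := (k:ℝ)
      ε := Complex.I ^ k
      f₀ := 0
      g₀ := 0
      hf_int := hint p
      hg_int := hint (-ptilde)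
      hk := by exact_mod_cast hk
      hε := pow_ne_zero _ Complex.I_ne_zero
      h_feq := hfeq
      hf_top := htopF
      hg_top := htopG } with hP
  have hPs : IsStrongFEPair P := ⟨rfl, rfl⟩
  -- the completed L-functions
  set F : ℂ → ℂ := fun s => 2 * Complex.cos ((Real.pi : ℂ) * s / 2) * P.Λ s with hF
  set G : ℂ → ℂ := fun s => 2 * Complex.cos ((Real.pi : ℂ) * s / 2) * P.symm.Λ s with hG
  have hcosDiff : Differentiable ℂ (fun s : ℂ => 2 * Complex.cos ((Real.pi : ℂ) * s / 2)) := by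
    apply Differentiable.const_mul
    exact Complex.differentiable_cos.comp ((differentiable_id.const_mul _).div_const _)
  -- Mellin transform = Dirichlet series
  have hMellin : ∀ (c : ℕ → ℂ) (H : ℝ → ℂ),
      (∀ n, ‖c n‖ ≤ C' * ((n:ℝ)+1) ^ β) →
      (∀ t : ℝ, 0 < t → HasSum (fun n : ℕ => c n * ((Real.exp (-(d * ((n:ℝ)+1)) * t) : ℝ) : ℂ)) (H t)) →
      ∀ s : ℂ, α + ((k : ℝ) + 1) / 2 < s.re →
      mellin H s = (q:ℂ) ^ s * ((2 * Real.pi : ℝ) : ℂ) ^ (-s) * Complex.Gamma s *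
        ∑' n : ℕ, (c n * ((n:ℂ)+1) ^ (-s)) := by
    intro c H hbd' hHS' s hs
    have hs0 : 0 < s.re := by
      have : (1:ℝ) ≤ ((k:ℝ)+1)/2 := by linarith
      linarith
    have hpn : ∀ n : ℕ, c n = 0 ∨ 0 < d * ((n:ℝ)+1) := fun n => Or.inr (by positivity)
    have hsum' : Summable (fun n : ℕ => ‖c n‖ / (d * ((n:ℝ)+1)) ^ s.re) := by
      have hbase : Summable (fun n : ℕ => ‖c n‖ / ((n:ℝ)+1) ^ s.re) :=
        aux_summable hbd' (by rw [hβ]; linarith)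
      refine (hbase.mul_left ((d ^ s.re)⁻¹)).congr fun n => ?_
      rw [Real.mul_rpow hd0.le (by positivity)]
      field_simp
    have hmel := hasSum_mellin hpn hs0 (fun t ht => hHS' t (mem_Ioi.mp ht)) hsum'
    rw [← hmel.tsum_eq]
    rw [show (q:ℂ) ^ s * ((2 * Real.pi : ℝ) : ℂ) ^ (-s) * Complex.Gamma s *
        ∑' n : ℕ, (c n * ((n:ℂ)+1) ^ (-s))
      = ∑' n : ℕ, ((q:ℂ) ^ s * ((2 * Real.pi : ℝ) : ℂ) ^ (-s) * Complex.Gamma s) *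
          (c n * ((n:ℂ)+1) ^ (-s)) from (tsum_mul_left).symm]
    apply tsum_congr
    intro n
    have hXd : d * ((n:ℝ)+1) = 2 * Real.pi / (q:ℝ) * ((n:ℝ)+1) := by rw [hd]
    rw [hXd, aux_cpow_split q hq n s]
    have h2π : ((2 * Real.pi : ℝ) : ℂ) ^ s ≠ 0 := by
      rw [Ne, Complex.cpow_eq_zero_iff, not_and_or]
      left
      simp [Real.pi_ne_zero, Real.pi_pos.ne']
    have hqs : (q:ℂ) ^ s ≠ 0 := by
      rw [Ne, Complex.cpow_eq_zero_iff, not_and_or]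
      left
      exact hqC
    have hns : ((n:ℂ)+1) ^ s ≠ 0 := by
      rw [Ne, Complex.cpow_eq_zero_iff, not_and_or]
      left
      exact Nat.cast_add_one_ne_zero n
    rw [Complex.cpow_neg ((2 * Real.pi : ℝ) : ℂ) s, Complex.cpow_neg ((n:ℂ)+1) s]
    field_simp
  refine ⟨F, G, ?_, ?_, ?_, ?_, ?_⟩
  · exact hcosDiff.mul hPs.differentiable_Λ
  · exact hcosDiff.mul hPs.symm.differentiable_Λ
  · -- value of F on the half-plane
    intro s hs
    have hv : P.Λ s = mellin hfun s := congr_fun hPs.Λ_eq s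
    rw [hF]
    simp only []
    rw [hv, hMellin cF hfun hbdF hHSF s hs, G0]
    rw [show (∑' n : ℕ,
        a (n + 1) * e2 ((((n : ℂ) + 1) * (p : ℂ)) / (q : ℂ)) *
          ((n : ℂ) + 1) ^ (-s + ((k : ℂ) - 1) / 2))
      = ∑' n : ℕ, (cF n * ((n:ℂ)+1) ^ (-s)) from ?_]
    · ring
    · apply tsum_congr
      intro n
      rw [hcF]
      simp only []
      rw [Complex.cpow_add _ _ (Nat.cast_add_one_ne_zero n)]
      ring
  · -- value of G on the half-plane
    intro s hs
    have hv : P.symm.Λ s = mellin gfun s := congr_fun hPs.symm_Λ_eq s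
    rw [hG]
    simp only []
    rw [hv, hMellin cG gfun hbdG hHSG s hs, G0]
    rw [show (∑' n : ℕ,
        a (n + 1) * e2 (-(((n : ℂ) + 1) * (ptilde : ℂ)) / (q : ℂ)) *
          ((n : ℂ) + 1) ^ (-s + ((k : ℂ) - 1) / 2))
      = ∑' n : ℕ, (cG n * ((n:ℂ)+1) ^ (-s)) from ?_]
    · ring
    · apply tsum_congr
      intro n
      rw [hcG]
      simp only []
      rw [Complex.cpow_add _ _ (Nat.cast_add_one_ne_zero n)]
      ring
  · -- global functional equation
    intro s
    have h1 := P.functional_equation ((k:ℂ) - s)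
    have hPk : P.k = (k:ℝ) := rfl
    have h2 : ((P.k : ℝ) : ℂ) - ((k:ℂ) - s) = s := by
      rw [hPk]
      push_cast
      ring
    rw [h2] at h1
    rw [hF, hG]
    simp only []
    rw [h1, smul_eq_mul]
    rw [aux_cos_shift hkeven s]
    have hε : P.ε = Complex.I ^ k := rfl
    rw [hε]
    ring
end
end

section
/- For every T > 0 and every t ∈ ℝ, the value u_T(t) is a real number satisfying 0 ≤ u_T(t) ≤ 4. -/
open MeasureTheory Set

noncomputable section

/-- `φ₀` is a smooth even bump function supported in `[-1,1]` with `0 ≤ φ₀ ≤ 1`,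
`φ₀(0) = 1` and `∫ φ₀² = 1`. -/
def IsBumpBase (φ₀ : ℝ → ℝ) : Prop :=
  ContDiff ℝ (⊤ : ℕ∞) φ₀ ∧ (∀ x, φ₀ (-x) = φ₀ x) ∧ tsupport φ₀ ⊆ Set.Icc (-1) 1 ∧
  (∀ x, 0 ≤ φ₀ x ∧ φ₀ x ≤ 1) ∧ φ₀ 0 = 1 ∧ (∫ u : ℝ, (φ₀ u) ^ 2) = 1

/-- `ψ(x) = φ₀(log x)`. -/
def psiF (φ₀ : ℝ → ℝ) (x : ℝ) : ℝ := φ₀ (Real.log x)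

/-- `λ(x) = ∫₀^∞ ψ(y)ψ(x/y) dy/y`. -/
def lamF (φ₀ : ℝ → ℝ) (x : ℝ) : ℝ :=
  ∫ y in Set.Ioi (0 : ℝ), psiF φ₀ y * psiF φ₀ (x / y) / y

/-- `λ_T(x) = T x^{-2iT^{3/2}} λ(x^T)`. -/
def lamT (φ₀ : ℝ → ℝ) (T x : ℝ) : ℂ :=
  (T : ℂ) * (x : ℂ) ^ (-(2 * Complex.I * ((T ^ ((3 : ℝ) / 2) : ℝ) : ℂ))) * (lamF φ₀ (x ^ T) : ℂ)

/-- `u_T(t) = ∫₀^∞ λ_T(x) x^{it-1} dx`. -/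
def uT (φ₀ : ℝ → ℝ) (T t : ℝ) : ℂ :=
  ∫ x in Set.Ioi (0 : ℝ), lamT φ₀ T x * (x : ℂ) ^ (Complex.I * (t : ℂ) - 1)

/-! ### Auxiliary lemmas -/

lemma integral_Ioi_eq_integral_exp {E : Type*} [NormedAddCommGroup E] [NormedSpace ℝ E]
    (g : ℝ → E) :
    ∫ x in Set.Ioi (0:ℝ), g x = ∫ v : ℝ, Real.exp v • g (Real.exp v) := by
  have h := integral_image_eq_integral_abs_deriv_smul (s := (Set.univ : Set ℝ))
    MeasurableSet.univ (fun x _ => (Real.hasDerivAt_exp x).hasDerivWithinAt)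
    (Real.exp_injective.injOn) g
  rw [Set.image_univ, Real.range_exp] at h
  simpa [abs_of_pos (Real.exp_pos _)] using h

lemma cpow_exp (v : ℝ) (z : ℂ) :
    ((Real.exp v : ℝ) : ℂ) ^ z = Complex.exp (z * v) := by
  rw [Complex.ofReal_exp, Complex.cpow_def_of_ne_zero (Complex.exp_ne_zero _),
    Complex.log_exp (by simpa using Real.pi_pos) (by simp [Real.pi_nonneg]), mul_comm]

lemma lamF_exp (φ₀ : ℝ → ℝ) (v : ℝ) :
    lamF φ₀ (Real.exp v) = ∫ w : ℝ, φ₀ w * φ₀ (v - w) := by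
  rw [lamF, integral_Ioi_eq_integral_exp]
  congr 1; funext w
  have h : Real.exp v / Real.exp w = Real.exp (v - w) := (Real.exp_sub v w).symm
  rw [smul_eq_mul, h]
  simp only [psiF, Real.log_exp]
  field_simp

lemma step_pointwise (φ₀ : ℝ → ℝ) (T t v : ℝ) (hT : T ≠ 0) :
    Real.exp v • (lamT φ₀ T (Real.exp v) * ((Real.exp v : ℝ) : ℂ) ^ (Complex.I * (t : ℂ) - 1))
    = (T:ℂ) * (lamF φ₀ (Real.exp (T*v)) : ℂ) *
        Complex.exp (Complex.I * (((t - 2*T^((3:ℝ)/2))/T : ℝ) : ℂ) * ((T*v : ℝ) : ℂ)) := by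
  have hrp : (Real.exp v) ^ T = Real.exp (T*v) := by rw [mul_comm, Real.exp_mul]
  rw [lamT, cpow_exp, cpow_exp, hrp, Complex.real_smul, Complex.ofReal_exp]
  have key : Complex.exp (v:ℂ) *
      Complex.exp (-(2 * Complex.I * ((T ^ ((3:ℝ)/2) : ℝ) : ℂ)) * (v:ℂ)) *
      Complex.exp ((Complex.I * (t:ℂ) - 1) * (v:ℂ))
      = Complex.exp (Complex.I * (((t - 2*T^((3:ℝ)/2))/T : ℝ) : ℂ) * ((T*v : ℝ) : ℂ)) := by
    rw [← Complex.exp_add, ← Complex.exp_add]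
    congr 1
    have hT' : (T:ℂ) ≠ 0 := Complex.ofReal_ne_zero.2 hT
    push_cast
    field_simp
    ring
  calc Complex.exp (v:ℂ) *
        ((T:ℂ) * Complex.exp (-(2 * Complex.I * ((T ^ ((3:ℝ)/2) : ℝ) : ℂ)) * (v:ℂ)) *
          (lamF φ₀ (Real.exp (T*v)) : ℂ) * Complex.exp ((Complex.I * (t:ℂ) - 1) * (v:ℂ)))
      = (T:ℂ) * (lamF φ₀ (Real.exp (T*v)) : ℂ) *
          (Complex.exp (v:ℂ) *
            Complex.exp (-(2 * Complex.I * ((T ^ ((3:ℝ)/2) : ℝ) : ℂ)) * (v:ℂ)) *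
            Complex.exp ((Complex.I * (t:ℂ) - 1) * (v:ℂ))) := by ring
    _ = _ := by rw [key]

lemma uT_eq (φ₀ : ℝ → ℝ) (T t : ℝ) (hT : 0 < T) :
    uT φ₀ T t = ∫ u : ℝ, (lamF φ₀ (Real.exp u) : ℂ) *
      Complex.exp (Complex.I * (((t - 2*T^((3:ℝ)/2))/T : ℝ) : ℂ) * (u : ℂ)) := by
  set s : ℝ := (t - 2*T^((3:ℝ)/2))/T with hs
  set G : ℝ → ℂ := fun u => (T:ℂ) * ((lamF φ₀ (Real.exp u) : ℂ) *
    Complex.exp (Complex.I * (s : ℂ) * (u : ℂ))) with hG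
  have h1 : uT φ₀ T t = ∫ v : ℝ, G (T * v) := by
    rw [uT, integral_Ioi_eq_integral_exp]
    congr 1; funext v
    have := step_pointwise φ₀ T t v hT.ne'
    rw [← hs] at this
    rw [this, hG]
    ring
  rw [h1, Measure.integral_comp_mul_left G T, hG]
  rw [integral_const_mul]
  rw [abs_of_pos (inv_pos.2 hT), Complex.real_smul]
  rw [← mul_assoc]
  norm_cast
  rw [inv_mul_cancel₀ hT.ne']
  simp

/-- `F(s) = ∫ φ₀(u) e^{isu} du`. -/
def Fc (φ₀ : ℝ → ℝ) (s : ℝ) : ℂ :=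
  ∫ u : ℝ, (φ₀ u : ℂ) * Complex.exp (Complex.I * (s:ℂ) * (u:ℂ))

section Aux
variable {φ₀ : ℝ → ℝ}
variable (hc : Continuous φ₀) (hsupp : tsupport φ₀ ⊆ Set.Icc (-1) 1)
  (heven : ∀ x, φ₀ (-x) = φ₀ x) (hbd : ∀ x, 0 ≤ φ₀ x ∧ φ₀ x ≤ 1)

include hsupp in
lemma zero_of_nmem (x : ℝ) (hx : x ∉ Set.Icc (-1:ℝ) 1) : φ₀ x = 0 :=
  image_eq_zero_of_notMem_tsupport (fun h => hx (hsupp h))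

include hc hsupp in
lemma integrable_phi : Integrable φ₀ := by
  apply hc.integrable_of_hasCompactSupport
  exact HasCompactSupport.intro isCompact_Icc (zero_of_nmem hsupp)

include hc hsupp hbd in
lemma integral_phi_le : ∫ u : ℝ, φ₀ u ≤ 2 := by
  have hind : Integrable ((Set.Icc (-1:ℝ) 1).indicator (fun _ => (1:ℝ))) := by
    rw [integrable_indicator_iff measurableSet_Icc]
    exact integrableOn_const (by simp [Real.volume_Icc]) (by simp)
  have hle : ∀ u, φ₀ u ≤ (Set.Icc (-1:ℝ) 1).indicator (fun _ => (1:ℝ)) u := by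
    intro u
    by_cases hu : u ∈ Set.Icc (-1:ℝ) 1
    · simp [Set.indicator_of_mem hu, (hbd u).2]
    · simp [Set.indicator_of_notMem hu, zero_of_nmem hsupp u hu]
  calc ∫ u : ℝ, φ₀ u ≤ ∫ u : ℝ, (Set.Icc (-1:ℝ) 1).indicator (fun _ => (1:ℝ)) u :=
        integral_mono (integrable_phi hc hsupp) hind hle
    _ = 2 := by
        rw [integral_indicator_const _ measurableSet_Icc]
        simp [Real.volume_Icc]
        norm_num

include hc hsupp hbd in
lemma norm_Fc_le (s : ℝ) : ‖Fc φ₀ s‖ ≤ 2 := by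
  calc ‖Fc φ₀ s‖ ≤ ∫ u : ℝ, ‖(φ₀ u : ℂ) * Complex.exp (Complex.I * (s:ℂ) * (u:ℂ))‖ :=
        norm_integral_le_integral_norm _
    _ = ∫ u : ℝ, φ₀ u := by
        congr 1; funext u
        rw [norm_mul, Complex.norm_exp]
        simp [abs_of_nonneg (hbd u).1]
    _ ≤ 2 := integral_phi_le hc hsupp hbd

include heven in
lemma Fc_im_eq_zero (s : ℝ) : (Fc φ₀ s).im = 0 := by
  have hconj : (starRingEnd ℂ) (Fc φ₀ s) = Fc φ₀ s := by
    rw [Fc, ← integral_conj]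
    have h1 : (fun u : ℝ => (starRingEnd ℂ) ((φ₀ u : ℂ) * Complex.exp (Complex.I * (s:ℂ) * (u:ℂ))))
        = (fun u : ℝ => (φ₀ (-u) : ℂ) * Complex.exp (Complex.I * (s:ℂ) * (((-u) : ℝ):ℂ))) := by
      funext u
      rw [map_mul, Complex.conj_ofReal, ← Complex.exp_conj, heven]
      congr 2
      simp [Complex.conj_I]
    rw [h1, integral_neg_eq_self
      (fun u : ℝ => (φ₀ u : ℂ) * Complex.exp (Complex.I * (s:ℂ) * ((u : ℝ):ℂ)))]
  exact (Complex.conj_eq_iff_im.mp hconj)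

include hc hsupp in
lemma conv_integral (s : ℝ) :
    (∫ u : ℝ, Complex.ofReal (∫ w : ℝ, φ₀ w * φ₀ (u - w)) *
      Complex.exp (Complex.I * (s:ℂ) * (u:ℂ)))
    = Fc φ₀ s * Fc φ₀ s := by
  set e : ℝ → ℂ := fun u => Complex.exp (Complex.I * (s:ℂ) * (u:ℂ)) with he
  have hP : Integrable (Function.uncurry fun u w : ℝ =>
      (φ₀ w : ℂ) * (φ₀ (u - w) : ℂ) * e u) (volume.prod volume) := by
    apply Continuous.integrable_of_hasCompactSupport
    · apply Continuous.mul
      · exact ((Complex.continuous_ofReal.comp (hc.comp continuous_snd)).mul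
          (Complex.continuous_ofReal.comp (hc.comp (continuous_fst.sub continuous_snd))))
      · exact Complex.continuous_exp.comp (by fun_prop)
    · apply HasCompactSupport.intro (isCompact_Icc.prod isCompact_Icc
        (s := Set.Icc (-2:ℝ) 2) (t := Set.Icc (-1:ℝ) 1))
      intro p hp
      by_cases h2 : φ₀ p.2 = 0
      · simp [Function.uncurry, h2]
      · have hp2 : p.2 ∈ Set.Icc (-1:ℝ) 1 := by
          by_contra h; exact h2 (zero_of_nmem hsupp _ h)
        have hp1 : p.1 ∉ Set.Icc (-2:ℝ) 2 := fun h => hp (Set.mk_mem_prod h hp2)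
        have : φ₀ (p.1 - p.2) = 0 := by
          apply zero_of_nmem hsupp
          intro h
          apply hp1
          simp only [Set.mem_Icc] at h hp2 ⊢
          constructor <;> linarith [h.1, h.2, hp2.1, hp2.2]
        simp [Function.uncurry, this]
  calc (∫ u : ℝ, Complex.ofReal (∫ w : ℝ, φ₀ w * φ₀ (u - w)) * e u)
      = ∫ u : ℝ, ∫ w : ℝ, (φ₀ w : ℂ) * (φ₀ (u - w) : ℂ) * e u := by
        congr 1; funext u
        rw [show (Complex.ofReal (∫ w : ℝ, φ₀ w * φ₀ (u - w)))
            = ∫ w : ℝ, (φ₀ w : ℂ) * (φ₀ (u - w) : ℂ) from by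
          refine Eq.trans (integral_ofReal (𝕜 := ℂ)
            (f := fun w => φ₀ w * φ₀ (u - w))).symm ?_
          push_cast
          rfl]
        rw [← integral_mul_const]
    _ = ∫ w : ℝ, ∫ u : ℝ, (φ₀ w : ℂ) * (φ₀ (u - w) : ℂ) * e u := integral_integral_swap hP
    _ = ∫ w : ℝ, (φ₀ w : ℂ) * (Fc φ₀ s * e w) := by
        congr 1; funext w
        simp_rw [mul_assoc]
        rw [integral_const_mul]
        congr 1
        have h1 : (fun u : ℝ => (φ₀ (u - w) : ℂ) * e u)
            = fun u : ℝ => ((fun x : ℝ => (φ₀ x : ℂ) * (e x * e w)) (u - w)) := by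
          funext u
          simp only [he]
          rw [← Complex.exp_add]
          congr 2
          push_cast
          ring
        rw [h1, integral_sub_right_eq_self (fun x : ℝ => (φ₀ x : ℂ) * (e x * e w)) w]
        simp_rw [← mul_assoc]
        rw [integral_mul_const, Fc]
    _ = Fc φ₀ s * Fc φ₀ s := by
        simp_rw [mul_comm (Fc φ₀ s) _, ← mul_assoc]
        rw [integral_mul_const, Fc]

end Aux

/-- For every `T > 0` and `t ∈ ℝ`, `u_T(t)` is real and
`0 ≤ u_T(t) ≤ 4`. -/
theorem uT_real_and_bounded
    (φ₀ : ℝ → ℝ) (hφ₀ : IsBumpBase φ₀) (T t : ℝ) (hT : 0 < T) :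
    (uT φ₀ T t).im = 0 ∧ 0 ≤ (uT φ₀ T t).re ∧ (uT φ₀ T t).re ≤ 4 := by
  obtain ⟨hcd, heven, hsupp, hbd, -, -⟩ := hφ₀
  have hc : Continuous φ₀ := hcd.continuous
  set s : ℝ := (t - 2*T^((3:ℝ)/2))/T with hs
  have h1 : uT φ₀ T t = Fc φ₀ s * Fc φ₀ s := by
    calc uT φ₀ T t = ∫ u : ℝ, (lamF φ₀ (Real.exp u) : ℂ) *
        Complex.exp (Complex.I * (s : ℂ) * (u : ℂ)) := uT_eq φ₀ T t hT
      _ = ∫ u : ℝ, Complex.ofReal (∫ w : ℝ, φ₀ w * φ₀ (u - w)) *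
          Complex.exp (Complex.I * (s:ℂ) * (u:ℂ)) := by
          congr 1; funext u
          rw [lamF_exp]
      _ = Fc φ₀ s * Fc φ₀ s := conv_integral hc hsupp s
  have him : (Fc φ₀ s).im = 0 := Fc_im_eq_zero heven s
  have hnorm : ‖Fc φ₀ s‖ ≤ 2 := norm_Fc_le hc hsupp hbd s
  set r : ℝ := (Fc φ₀ s).re with hr
  have hFc : Fc φ₀ s = (r : ℂ) := by
    apply Complex.ext <;> simp [him, hr]
  have habs : |r| ≤ 2 := by
    calc |r| ≤ ‖Fc φ₀ s‖ := Complex.abs_re_le_norm _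
      _ ≤ 2 := hnorm
  have h2 : uT φ₀ T t = ((r * r : ℝ) : ℂ) := by
    rw [h1, hFc]; push_cast; ring
  refine ⟨?_, ?_, ?_⟩ <;> rw [h2]
  · simp
  · simpa using mul_self_nonneg r
  · have := abs_le.mp habs
    simp only [Complex.ofReal_re]
    nlinarith
end
end

section
/- Let (a_n)_{n≥1} be complex numbers with a_1 ≠ 0 and a_n = O(n^α) for some α > 0. Then for every T > 2/log 2 and every s ∈ ℂ with Re s > α + 1, the integral ∫_{−∞}^{∞} (Σ_{n≥1} a_n n^{−s−it}) u_T(t) dt converges absolutely and equals 2π a₁ T. -/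
open MeasureTheory Set

noncomputable section

namespace Aux18

open scoped FourierTransform Real Convolution

/-- The (multiplicative) convolution square of `φ₀`, written additively. -/
def Lam (φ₀ : ℝ → ℝ) : ℝ → ℝ := fun u => ∫ w : ℝ, φ₀ w * φ₀ (u - w)

/-- `g(v) = λ_T(e^v) e^v`, a smooth compactly supported function. -/
def gT (φ₀ : ℝ → ℝ) (T : ℝ) : ℝ → ℂ := fun v =>
  (T : ℂ) * Complex.exp (-(2 * Complex.I * ((T ^ ((3 : ℝ) / 2) : ℝ) : ℂ)) * v) *
    (Lam φ₀ (T * v) : ℂ)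

variable {φ₀ : ℝ → ℝ}

lemma Lam_eq_conv : Lam φ₀ = φ₀ ⋆[ContinuousLinearMap.mul ℝ ℝ] φ₀ := by
  funext u
  simp [Lam, convolution_def]

lemma hcs (hsupp : tsupport φ₀ ⊆ Icc (-1) 1) : HasCompactSupport φ₀ :=
  IsCompact.of_isClosed_subset isCompact_Icc (isClosed_tsupport _) hsupp

lemma Lam_contDiff (hc : ContDiff ℝ (⊤ : ℕ∞) φ₀) (hsupp : tsupport φ₀ ⊆ Icc (-1) 1) :
    ContDiff ℝ (⊤ : ℕ∞) (Lam φ₀) := by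
  rw [Lam_eq_conv]
  exact HasCompactSupport.contDiff_convolution_right _ (hcs hsupp)
    (hc.continuous.locallyIntegrable) hc

lemma Lam_eq_zero (hsupp : tsupport φ₀ ⊆ Icc (-1) 1) {x : ℝ} (hx : x ∉ Icc (-2:ℝ) 2) :
    Lam φ₀ x = 0 := by
  rw [Lam_eq_conv]
  by_contra h
  have hx' : x ∈ Function.support (φ₀ ⋆[ContinuousLinearMap.mul ℝ ℝ] φ₀) := h
  obtain ⟨a, ha, b, hb, rfl⟩ := support_convolution_subset (μ := volume)
    (L := ContinuousLinearMap.mul ℝ ℝ) (f := φ₀) (g := φ₀) hx'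
  have ha' : a ∈ Icc (-1:ℝ) 1 := hsupp (subset_tsupport _ ha)
  have hb' : b ∈ Icc (-1:ℝ) 1 := hsupp (subset_tsupport _ hb)
  have : a + b ∈ Icc (-2:ℝ) 2 := ⟨by linarith [ha'.1, hb'.1], by linarith [ha'.2, hb'.2]⟩
  exact hx this

lemma Lam_zero (heven : ∀ x, φ₀ (-x) = φ₀ x) (hint : (∫ u : ℝ, (φ₀ u) ^ 2) = 1) :
    Lam φ₀ 0 = 1 := by
  have h : ∀ w : ℝ, φ₀ w * φ₀ (0 - w) = (φ₀ w) ^ 2 := by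
    intro w; rw [zero_sub, heven]; ring
  rw [Lam]
  simp_rw [h]
  exact hint

lemma integral_Ioi_comp_exp {F : Type*} [NormedAddCommGroup F] [NormedSpace ℝ F]
    (g : ℝ → F) :
    ∫ x in Ioi (0:ℝ), g x = ∫ v : ℝ, Real.exp v • g (Real.exp v) := by
  have h : Real.exp '' univ = Ioi (0:ℝ) := by rw [image_univ, Real.range_exp]
  rw [← h, integral_image_eq_integral_abs_deriv_smul MeasurableSet.univ
    (fun x _ => (Real.hasDerivAt_exp x).hasDerivWithinAt) Real.exp_injective.injOn g]
  simp [abs_of_pos (Real.exp_pos _)]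

lemma cpow_exp_real (v : ℝ) (c : ℂ) :
    ((Real.exp v : ℝ) : ℂ) ^ c = Complex.exp (c * v) := by
  rw [Complex.ofReal_exp, Complex.cpow_def_of_ne_zero (Complex.exp_ne_zero _),
    Complex.log_exp (by simp [Real.pi_pos]) (by simp [Real.pi_pos.le]), mul_comm]

lemma lamF_eq {x : ℝ} (hx : 0 < x) : lamF φ₀ x = Lam φ₀ (Real.log x) := by
  rw [lamF, integral_Ioi_comp_exp (fun y => psiF φ₀ y * psiF φ₀ (x / y) / y)]
  rw [Lam]
  congr 1; funext w
  have he : Real.exp w ≠ 0 := (Real.exp_pos w).ne'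
  simp only [psiF, Real.log_exp, Real.log_div hx.ne' he, smul_eq_mul]
  field_simp

lemma uT_eq (T t : ℝ) (hT : 0 < T) :
    uT φ₀ T t = ∫ v : ℝ, gT φ₀ T v * Complex.exp (Complex.I * t * v) := by
  rw [uT, integral_Ioi_comp_exp]
  congr 1; funext v
  have hx : (0:ℝ) < Real.exp v := Real.exp_pos v
  have hrp : (Real.exp v) ^ T = Real.exp (T * v) := by
    rw [Real.rpow_def_of_pos hx, Real.log_exp, mul_comm]
  rw [lamT, hrp, lamF_eq (Real.exp_pos _), Real.log_exp, cpow_exp_real, cpow_exp_real]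
  rw [Complex.real_smul, Complex.ofReal_exp, gT]
  rw [show Complex.exp ((Complex.I * ↑t - 1) * ↑v)
      = Complex.exp (Complex.I * ↑t * ↑v) * Complex.exp (-↑v) by
    rw [← Complex.exp_add]; congr 1; ring]
  rw [show Complex.exp (↑v : ℂ) * ((↑T : ℂ) * Complex.exp (-(2 * Complex.I *
        ((T ^ ((3 : ℝ) / 2) : ℝ) : ℂ)) * ↑v) * (Lam φ₀ (T * v) : ℂ) *
        (Complex.exp (Complex.I * ↑t * ↑v) * Complex.exp (-↑v)))
      = (Complex.exp (↑v : ℂ) * Complex.exp (-↑v)) * (((↑T : ℂ) * Complex.exp (-(2 * Complex.I *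
        ((T ^ ((3 : ℝ) / 2) : ℝ) : ℂ)) * ↑v) * (Lam φ₀ (T * v) : ℂ)) *
        Complex.exp (Complex.I * ↑t * ↑v)) by ring]
  rw [← Complex.exp_add, add_neg_cancel, Complex.exp_zero, one_mul]

lemma uT_fourier (T t : ℝ) (hT : 0 < T) :
    uT φ₀ T t = 𝓕 (gT φ₀ T) (-(t / (2 * Real.pi))) := by
  rw [uT_eq T t hT, Real.fourier_real_eq_integral_exp_smul]
  congr 1; funext v
  have hπ : (Real.pi : ℝ) ≠ 0 := Real.pi_ne_zero
  have h1 : -2 * Real.pi * v * -(t / (2 * Real.pi)) = v * t := by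
    field_simp
  rw [h1, smul_eq_mul, mul_comm]
  congr 1
  push_cast
  ring

lemma gT_contDiff (hc : ContDiff ℝ (⊤ : ℕ∞) φ₀) (hsupp : tsupport φ₀ ⊆ Icc (-1) 1) (T : ℝ) :
    ContDiff ℝ (⊤ : ℕ∞) (gT φ₀ T) := by
  apply ContDiff.mul
  · exact contDiff_const.mul ((contDiff_const.mul Complex.ofRealCLM.contDiff).cexp)
  · exact Complex.ofRealCLM.contDiff.comp
      ((Lam_contDiff hc hsupp).comp (contDiff_const.mul contDiff_id))

lemma gT_hcs (hsupp : tsupport φ₀ ⊆ Icc (-1) 1) {T : ℝ} (hT : 0 < T) :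
    HasCompactSupport (gT φ₀ T) := by
  apply HasCompactSupport.intro (isCompact_Icc (a := -(2/T)) (b := 2/T))
  intro v hv
  have h2 : T * v ∉ Icc (-2:ℝ) 2 := by
    simp only [mem_Icc, not_and_or, not_le] at hv ⊢
    rcases hv with h | h
    · left
      have h3 : T * v < T * (-(2/T)) := (mul_lt_mul_iff_right₀ hT).mpr h
      have h4 : T * (-(2/T)) = -2 := by field_simp
      linarith
    · right
      have h3 : T * (2/T) < T * v := (mul_lt_mul_iff_right₀ hT).mpr h
      have h4 : T * (2/T) = 2 := by field_simp; try ring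
      linarith
  have h0 := Lam_eq_zero hsupp h2
  simp [gT, h0]

lemma gT_int_aux (hc : ContDiff ℝ (⊤ : ℕ∞) φ₀) (hsupp : tsupport φ₀ ⊆ Icc (-1) 1)
    {T : ℝ} (hT : 0 < T) (k n : ℕ) :
    Integrable (fun v : ℝ => ‖v‖ ^ k * ‖iteratedFDeriv ℝ n (gT φ₀ T) v‖) := by
  apply Continuous.integrable_of_hasCompactSupport
  · have hcd : ContDiff ℝ ((n:ℕ):ℕ∞) (gT φ₀ T) :=
      (gT_contDiff hc hsupp T).of_le (by exact_mod_cast le_top)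
    exact (continuous_norm.pow k).mul (hcd.continuous_iteratedFDeriv le_rfl).norm
  · exact (((gT_hcs hsupp hT).iteratedFDeriv n).norm).mul_left

lemma gT_integrable (hc : ContDiff ℝ (⊤ : ℕ∞) φ₀) (hsupp : tsupport φ₀ ⊆ Icc (-1) 1)
    {T : ℝ} (hT : 0 < T) : Integrable (gT φ₀ T) :=
  ((gT_contDiff hc hsupp T).continuous).integrable_of_hasCompactSupport (gT_hcs hsupp hT)

lemma fourier_gT_cont (hc : ContDiff ℝ (⊤ : ℕ∞) φ₀) (hsupp : tsupport φ₀ ⊆ Icc (-1) 1)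
    {T : ℝ} (hT : 0 < T) : Continuous (𝓕 (gT φ₀ T)) := by
  have := Real.contDiff_fourier (f := gT φ₀ T) (N := 0)
    (fun n hn => by simpa [norm_iteratedFDeriv_zero] using gT_int_aux hc hsupp hT n 0)
  exact this.continuous

lemma fourier_gT_integrable (hc : ContDiff ℝ (⊤ : ℕ∞) φ₀) (hsupp : tsupport φ₀ ⊆ Icc (-1) 1)
    {T : ℝ} (hT : 0 < T) : Integrable (𝓕 (gT φ₀ T)) := by
  set g := gT φ₀ T with hg
  have hcd : ContDiff ℝ ((2:ℕ) : ℕ∞) g :=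
    (gT_contDiff hc hsupp T).of_le (by exact_mod_cast le_top)
  have h'f : ∀ (k n : ℕ), (k:ℕ∞) ≤ (0:ℕ) → (n:ℕ∞) ≤ ((2:ℕ):ℕ∞) →
      Integrable (fun v ↦ ‖v‖^k * ‖iteratedFDeriv ℝ n g v‖) :=
    fun k n _ _ => gT_int_aux hc hsupp hT k n
  have hb0 := fun w => Real.pow_mul_norm_iteratedFDeriv_fourier_le (K := ((0:ℕ):ℕ∞))
    (N := ((2:ℕ):ℕ∞)) hcd h'f (k := 0) (n := 2) le_rfl le_rfl w
  obtain ⟨C₂, hb⟩ : ∃ C, ∀ w : ℝ, ‖w‖ ^ 2 * ‖𝓕 g w‖ ≤ C := by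
    refine ⟨(2 * π) ^ (0:ℕ) * (2 * ((0:ℕ):ℝ) + 2) ^ 2 *
      ∑ p ∈ Finset.range (0 + 1) ×ˢ Finset.range (2 + 1),
        ∫ (v : ℝ), ‖v‖ ^ p.1 * ‖iteratedFDeriv ℝ p.2 g v‖, fun w => ?_⟩
    rw [show ‖𝓕 g w‖ = ‖iteratedFDeriv ℝ 0 (𝓕 g) w‖ from (norm_iteratedFDeriv_zero).symm]
    exact hb0 w
  obtain ⟨C₀, h0⟩ : ∃ C, ∀ w : ℝ, ‖𝓕 g w‖ ≤ C :=
    ⟨∫ v, ‖g v‖, fun w => VectorFourier.norm_fourierIntegral_le_integral_norm _ _ _ _ _⟩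
  apply Integrable.mono' ((integrable_inv_one_add_sq).const_mul (C₀ + C₂))
    (fourier_gT_cont hc hsupp hT).aestronglyMeasurable
  filter_upwards with w
  have hpos : (0:ℝ) < 1 + w ^ 2 := by positivity
  rw [← div_eq_mul_inv, le_div_iff₀ hpos]
  have h2 := hb w
  rw [Real.norm_eq_abs, sq_abs] at h2
  nlinarith [h0 w, norm_nonneg (𝓕 g w)]

lemma uT_integrable (hc : ContDiff ℝ (⊤ : ℕ∞) φ₀) (hsupp : tsupport φ₀ ⊆ Icc (-1) 1)
    {T : ℝ} (hT : 0 < T) : Integrable (uT φ₀ T) := by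
  have hR : (-(2*π)⁻¹ : ℝ) ≠ 0 := by
    simp [Real.pi_ne_zero]
  have h := (fourier_gT_integrable hc hsupp hT).comp_mul_right' (R := -(2*π)⁻¹) hR
  apply h.congr
  filter_upwards with t
  rw [uT_fourier T t hT]
  congr 1
  ring

lemma key (hc : ContDiff ℝ (⊤ : ℕ∞) φ₀) (hsupp : tsupport φ₀ ⊆ Icc (-1) 1)
    {T : ℝ} (hT : 0 < T) (L : ℝ) :
    ∫ t : ℝ, Complex.exp (-(Complex.I * t * L)) * uT φ₀ T t
      = ((2 * π : ℝ) : ℂ) * gT φ₀ T L := by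
  set g := gT φ₀ T with hg
  set Φ : ℝ → ℂ := fun ξ => Complex.exp (((-2 * π * ξ * -L : ℝ) : ℂ) * Complex.I) • 𝓕 g ξ
    with hΦ
  have hπ : (π : ℝ) ≠ 0 := Real.pi_ne_zero
  have step1 : ∀ t : ℝ, Complex.exp (-(Complex.I * t * L)) * uT φ₀ T t
      = Φ (t * (-(2*π))⁻¹) := by
    intro t
    have harg : (t * (-(2*π))⁻¹ : ℝ) = -(t / (2*π)) := by
      field_simp
    rw [hΦ]
    simp only
    have h5 : (-2 * π * (t * (-(2*π))⁻¹) * -L : ℝ) = -(t*L) := by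
      field_simp
    rw [h5, harg, uT_fourier T t hT, smul_eq_mul]
    congr 2
    push_cast
    ring
  calc ∫ t : ℝ, Complex.exp (-(Complex.I * t * L)) * uT φ₀ T t
      = ∫ t : ℝ, Φ (t * (-(2*π))⁻¹) := by simp_rw [step1]
    _ = |((-(2*π))⁻¹ : ℝ)⁻¹| • ∫ ξ, Φ ξ := Measure.integral_comp_mul_right Φ _
    _ = ((2 * π : ℝ) : ℂ) * gT φ₀ T L := by
        have h1 : ∫ ξ, Φ ξ = 𝓕 (𝓕 g) (-L) := by
          rw [Real.fourier_real_eq_integral_exp_smul]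
        have h2 : 𝓕 (𝓕 g) (-L) = g L := by
          rw [← Real.fourierInv_eq_fourier_neg]
          exact (gT_integrable hc hsupp hT).fourierInv_fourier_eq
            (fourier_gT_integrable hc hsupp hT)
            ((gT_contDiff hc hsupp T).continuous.continuousAt)
        rw [h1, h2]
        have h3 : |((-(2*π))⁻¹ : ℝ)⁻¹| = 2 * π := by
          rw [inv_inv, abs_neg, abs_of_pos (by positivity)]
        rw [h3, Complex.real_smul]

end Aux18

open Aux18 in
/-- For `T > 2/log 2` and `Re s > α + 1`,
`∫ (Σ_{n≥1} a_n n^{-s-it}) u_T(t) dt = 2π a₁ T`, with absolute convergence. -/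
theorem dirichlet_series_against_uT
    (φ₀ : ℝ → ℝ) (hφ₀ : IsBumpBase φ₀)
    (a : ℕ → ℂ) (ha1 : a 1 ≠ 0) (α : ℝ) (hα : 0 < α)
    (hbd : ∃ C : ℝ, ∀ n : ℕ, ‖a (n + 1)‖ ≤ C * ((n : ℝ) + 1) ^ α) :
    ∀ T : ℝ, 2 / Real.log 2 < T → ∀ s : ℂ, α + 1 < s.re →
      Integrable (fun t : ℝ =>
        (∑' n : ℕ, a (n + 1) * ((n : ℂ) + 1) ^ (-s - Complex.I * (t : ℂ))) * uT φ₀ T t) ∧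
      (∫ t : ℝ,
        (∑' n : ℕ, a (n + 1) * ((n : ℂ) + 1) ^ (-s - Complex.I * (t : ℂ))) * uT φ₀ T t) =
        2 * (Real.pi : ℂ) * a 1 * (T : ℂ) := by
  obtain ⟨hc, heven, hsupp, _, _, hint⟩ := hφ₀
  intro T hT2 s hs
  have hlog2 : (0:ℝ) < Real.log 2 := Real.log_pos one_lt_two
  have hT : 0 < T := lt_trans (by positivity) hT2
  obtain ⟨C, hC⟩ := hbd
  set S : ℕ → ℝ := fun n => ‖a (n+1)‖ * ((n:ℝ)+1) ^ (-s.re) with hS_def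
  have hpos : ∀ n : ℕ, (0:ℝ) < (n:ℝ)+1 := fun n => by positivity
  have hSle : ∀ n, S n ≤ C * ((n:ℝ)+1) ^ (α - s.re) := by
    intro n
    have h1 := mul_le_mul_of_nonneg_right (hC n) (Real.rpow_nonneg (hpos n).le (-s.re))
    calc S n ≤ C * ((n:ℝ)+1)^α * ((n:ℝ)+1)^(-s.re) := h1
      _ = C * ((n:ℝ)+1)^(α - s.re) := by
          rw [mul_assoc, ← Real.rpow_add (hpos n)]
          ring_nf
  have hsum0 : Summable (fun n : ℕ => ((n:ℝ)+1) ^ (α - s.re)) := by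
    have h1 : Summable (fun n : ℕ => ((n:ℝ)) ^ (α - s.re)) :=
      Real.summable_nat_rpow.mpr (by linarith)
    have h2 := (summable_nat_add_iff 1).mpr h1
    apply h2.congr
    intro n
    push_cast
    ring_nf
  have hS : Summable S :=
    Summable.of_nonneg_of_le (fun n => by positivity) hSle (hsum0.mul_left C)
  have hbase : ∀ n : ℕ, ((n:ℂ)+1) = (((n:ℝ)+1 : ℝ) : ℂ) := fun n => by push_cast; ring
  have hb : ∀ n : ℕ, ((n:ℂ)+1) ≠ 0 := fun n =>
    (hbase n) ▸ (Complex.ofReal_ne_zero.mpr (hpos n).ne')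
  have hnorm : ∀ (n : ℕ) (t : ℝ),
      ‖a (n + 1) * ((n : ℂ) + 1) ^ (-s - Complex.I * (t:ℂ))‖ = S n := by
    intro n t
    rw [norm_mul]
    congr 1
    rw [hbase n, Complex.norm_cpow_eq_rpow_re_of_pos (hpos n)]
    congr 1
    simp [Complex.sub_re, Complex.neg_re, Complex.mul_re]
  have hterm : ∀ n : ℕ,
      Continuous (fun t : ℝ => a (n+1) * ((n:ℂ)+1) ^ (-s - Complex.I * (t:ℂ))) := by
    intro n
    have h1 : (fun t : ℝ => a (n+1) * ((n:ℂ)+1) ^ (-s - Complex.I * (t:ℂ)))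
        = fun t : ℝ => a (n+1) *
            Complex.exp (Complex.log ((n:ℂ)+1) * (-s - Complex.I * (t:ℂ))) := by
      funext t; rw [Complex.cpow_def_of_ne_zero (hb n)]
    rw [h1]
    exact continuous_const.mul (Complex.continuous_exp.comp (continuous_const.mul
      (continuous_const.sub (continuous_const.mul Complex.continuous_ofReal))))
  have hcont : Continuous
      (fun t : ℝ => ∑' n : ℕ, a (n+1) * ((n:ℂ)+1) ^ (-s - Complex.I * (t:ℂ))) :=
    continuous_tsum hterm hS (fun n t => le_of_eq (hnorm n t))
  have hu_int : Integrable (uT φ₀ T) := uT_integrable hc hsupp hT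
  have hub : ∀ t : ℝ,
      ‖∑' n : ℕ, a (n+1) * ((n:ℂ)+1) ^ (-s - Complex.I * (t:ℂ))‖ ≤ ∑' n, S n := by
    intro t
    calc ‖∑' n : ℕ, a (n+1) * ((n:ℂ)+1) ^ (-s - Complex.I * (t:ℂ))‖
        ≤ ∑' n, ‖a (n+1) * ((n:ℂ)+1) ^ (-s - Complex.I * (t:ℂ))‖ :=
          norm_tsum_le_tsum_norm (hS.congr (fun n => (hnorm n t).symm))
      _ = ∑' n, S n := tsum_congr (fun n => hnorm n t)
  have hInt : Integrable (fun t : ℝ =>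
      (∑' n : ℕ, a (n + 1) * ((n : ℂ) + 1) ^ (-s - Complex.I * (t : ℂ))) * uT φ₀ T t) :=
    hu_int.bdd_mul hcont.aestronglyMeasurable (Filter.Eventually.of_forall hub)
  refine ⟨hInt, ?_⟩
  set F : ℕ → ℝ → ℂ := fun n t =>
    a (n+1) * ((n:ℂ)+1) ^ (-s - Complex.I * (t:ℂ)) * uT φ₀ T t with hF_def
  have hFint : ∀ n, Integrable (F n) := fun n =>
    hu_int.bdd_mul (hterm n).aestronglyMeasurable (Filter.Eventually.of_forall fun t => le_of_eq (hnorm n t))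
  have hFnorm : ∀ n, (∫ t, ‖F n t‖) = S n * ∫ t, ‖uT φ₀ T t‖ := by
    intro n
    rw [← integral_const_mul]
    congr 1; funext t
    rw [hF_def]
    simp only
    rw [norm_mul, hnorm n t]
  have hFsum : Summable (fun n => ∫ t, ‖F n t‖) :=
    ((hS.mul_right (∫ t, ‖uT φ₀ T t‖))).congr (fun n => (hFnorm n).symm)
  have hswap := integral_tsum_of_summable_integral_norm hFint hFsum
  have hpt : ∀ t : ℝ, ∑' n, F n t =
      (∑' n : ℕ, a (n+1) * ((n:ℂ)+1) ^ (-s - Complex.I * (t:ℂ))) * uT φ₀ T t :=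
    fun t => tsum_mul_right
  have hFval : ∀ n : ℕ, (∫ t, F n t)
      = a (n+1) * ((n:ℂ)+1) ^ (-s) * (((2*Real.pi:ℝ):ℂ) * gT φ₀ T (Real.log ((n:ℝ)+1))) := by
    intro n
    have hsplit : ∀ t : ℝ, ((n:ℂ)+1) ^ (-s - Complex.I * (t:ℂ))
        = ((n:ℂ)+1) ^ (-s) *
          Complex.exp (-(Complex.I * t * ((Real.log ((n:ℝ)+1) : ℝ) : ℂ))) := by
      intro t
      rw [show (-s - Complex.I * (t:ℂ)) = -s + -(Complex.I * (t:ℂ)) by ring,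
        Complex.cpow_add _ _ (hb n)]
      congr 1
      rw [Complex.cpow_def_of_ne_zero (hb n), hbase n, ← Complex.ofReal_log (hpos n).le]
      congr 1
      ring
    calc (∫ t, F n t)
        = ∫ t : ℝ, (a (n+1) * ((n:ℂ)+1)^(-s)) *
            (Complex.exp (-(Complex.I * t * ((Real.log ((n:ℝ)+1) : ℝ) : ℂ))) * uT φ₀ T t) := by
          congr 1; funext t
          rw [hF_def]
          simp only
          rw [hsplit t]
          ring
      _ = (a (n+1) * ((n:ℂ)+1)^(-s)) *
            ∫ t : ℝ, Complex.exp (-(Complex.I * t * ((Real.log ((n:ℝ)+1) : ℝ) : ℂ))) *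
              uT φ₀ T t :=
          integral_const_mul _ _
      _ = a (n+1) * ((n:ℂ)+1) ^ (-s) *
            (((2*Real.pi:ℝ):ℂ) * gT φ₀ T (Real.log ((n:ℝ)+1))) := by
          rw [key hc hsupp hT (Real.log ((n:ℝ)+1))]
  have hzero : ∀ n : ℕ, n ≠ 0 → (∫ t, F n t) = 0 := by
    intro n hn
    rw [hFval n]
    have h2n : (2:ℝ) ≤ (n:ℝ)+1 := by
      have h1 : (1:ℕ) ≤ n := Nat.one_le_iff_ne_zero.mpr hn
      have h2 : (1:ℝ) ≤ (n:ℝ) := by exact_mod_cast h1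
      linarith
    have hlogle : Real.log 2 ≤ Real.log ((n:ℝ)+1) := Real.log_le_log (by norm_num) h2n
    have h2T : 2 < T * Real.log 2 := by
      rw [div_lt_iff₀ hlog2] at hT2
      linarith
    have hL : 2 < T * Real.log ((n:ℝ)+1) := by nlinarith
    have hnot : T * Real.log ((n:ℝ)+1) ∉ Icc (-2:ℝ) 2 := by
      simp only [mem_Icc, not_and, not_le]
      intro _
      exact hL
    have hz := Lam_eq_zero hsupp hnot
    simp [gT, hz]
  have h0 : (∫ t, F 0 t) = 2 * (Real.pi:ℂ) * a 1 * T := by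
    rw [hFval 0]
    have hlog1 : Real.log (((0:ℕ):ℝ)+1) = 0 := by norm_num
    rw [hlog1]
    have hgT0 : gT φ₀ T 0 = (T : ℂ) := by
      simp [gT, Lam_zero heven hint]
    rw [hgT0]
    have h1 : (((0:ℕ):ℂ)+1) = 1 := by norm_num
    rw [h1, Complex.one_cpow]
    push_cast
    ring
  calc (∫ t : ℝ, (∑' n : ℕ, a (n + 1) * ((n : ℂ) + 1) ^ (-s - Complex.I * (t : ℂ))) * uT φ₀ T t)
      = ∫ t, ∑' n, F n t := by
        congr 1; funext t; exact (hpt t).symm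
    _ = ∑' n, ∫ t, F n t := hswap.symm
    _ = ∫ t, F 0 t := tsum_eq_single 0 hzero
    _ = 2 * (Real.pi:ℂ) * a 1 * T := h0
end
end
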